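/- Let n ≥ 80 and consider the uniform model with popularity p = 1/2 on a node set of size n+1 (so the in-degrees of the n+1 nodes are independent Bin(n,1/2) random variables, each with expectation n/2). Then E[Δ(x)] ≥ n/2 + (1/6)√(n·ln n). Consequently, for any fixed node u*, the constant mechanism that always returns u* has expected additive approximation E[Δ(x) − d_{u*}(x)] ≥ (1/6)√(n·ln n). -/

import Mathlib

open Finset

/-- In-degree of node `j` in the nomination profile `x` (no self-votes counted). -/
def indeg {N : Type*} [Fintype N] [DecidableEq N] (x : N → N → Bool) (j : N) : ℕ :=
  ((Finset.univ.erase j).filter (fun i => x i j)).card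

/-- The maximum in-degree `Δ(x)` of the nomination profile `x`. -/
def maxdeg {N : Type*} [Fintype N] [DecidableEq N] (x : N → N → Bool) : ℕ :=
  Finset.univ.sup (indeg x)

/-- Probability of the profile `x` in the a priori popularity model with
popularities `p`: each edge `(i,j)` with `i ≠ j` is present independently with
probability `p j`, and self-loops are never present. -/
noncomputable def apWeight {N : Type*} [Fintype N] [DecidableEq N]
    (p : N → ℝ) (x : N → N → Bool) : ℝ :=
  ∏ i, ∏ j, if i = j then (if x i j then 0 else 1) else (if x i j then p j else 1 - p j)

set_option maxHeartbeats 1000000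

namespace Stmt2Aux


lemma log_le_div_e {y : ℝ} (hy : 0 < y) : Real.log y ≤ y / Real.exp 1 := by
  have h := Real.log_le_sub_one_of_pos (show (0:ℝ) < y / Real.exp 1 by positivity)
  rw [Real.log_div (ne_of_gt hy) (Real.exp_ne_zero 1), Real.log_exp] at h
  linarith

lemma exp_neg_le {y : ℝ} (hy : 0 < y) : Real.exp (-((1 - y)/y)) ≤ y := by
  have h := Real.log_le_sub_one_of_pos (show (0:ℝ) < y⁻¹ by positivity)
  rw [Real.log_inv] at h
  have h2 : -((1 - y)/y) ≤ Real.log y := by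
    have hne : y ≠ 0 := ne_of_gt hy
    have : -((1-y)/y) = 1 - y⁻¹ := by field_simp; ring
    rw [this]; linarith
  calc Real.exp (-((1 - y)/y)) ≤ Real.exp (Real.log y) := Real.exp_le_exp.2 h2
    _ = y := Real.exp_log hy

lemma factor_lb {A B : ℝ} (hB : 0 ≤ B) (hBA : B < A) :
    Real.exp (-(2*B/(A - B))) ≤ (A - B)/(A + B) := by
  have hA : 0 < A := lt_of_le_of_lt hB hBA
  have hAB : (0:ℝ) < A - B := by linarith
  have hAB' : (0:ℝ) < A + B := by linarith
  have hy : 0 < (A - B)/(A + B) := by positivity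
  have h := exp_neg_le hy
  have heq : -((1 - (A - B)/(A + B))/((A - B)/(A + B))) = -(2*B/(A - B)) := by
    congr 1
    field_simp
    ring
  rwa [heq] at h

lemma sixteen_pow_le : ∀ m : ℕ, 1 ≤ m → 16 ^ m ≤ 4 * m * (Nat.centralBinom m)^2 := by
  intro m hm
  induction m with
  | zero => omega
  | succ k ih =>
    rcases Nat.eq_or_lt_of_le hm with h1 | h1
    · simp [← h1]
      decide
    · have hk : 1 ≤ k := by omega
      have ih' := ih hk
      have key := Nat.succ_mul_centralBinom_succ k
      refine Nat.le_of_mul_le_mul_left ?_ (show 0 < (k+1)^2 by positivity)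
      calc (k+1)^2 * 16^(k+1) = 16 * (k+1)^2 * 16^k := by ring
        _ ≤ 16 * (k+1)^2 * (4 * k * (Nat.centralBinom k)^2) := by
            exact Nat.mul_le_mul_left _ ih'
        _ ≤ 4 * (k+1) * (2 * (2*k+1) * Nat.centralBinom k)^2 := by
            nlinarith [sq_nonneg (Nat.centralBinom k)]
        _ = 4 * (k+1) * ((k+1) * Nat.centralBinom (k+1))^2 := by rw [key]
        _ = (k+1)^2 * (4 * (k+1) * (Nat.centralBinom (k+1))^2) := by ring


lemma central_real (m : ℕ) (hm : 1 ≤ m) :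
    (4:ℝ)^m ≤ 2 * Real.sqrt m * Nat.centralBinom m := by
  have h16n := sixteen_pow_le m hm
  have h16 : (16:ℝ)^m ≤ 4 * m * (Nat.centralBinom m)^2 := by exact_mod_cast h16n
  have hu : Real.sqrt m ^ 2 = (m:ℝ) := Real.sq_sqrt (by positivity)
  have h1 : ((4:ℝ)^m)^2 ≤ (2 * Real.sqrt m * Nat.centralBinom m)^2 := by
    have h2 : ((4:ℝ)^m)^2 = (16:ℝ)^m := by
      rw [← pow_mul, pow_mul']; norm_num
    rw [h2]
    calc (16:ℝ)^m ≤ 4 * m * (Nat.centralBinom m)^2 := h16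
      _ = (2 * Real.sqrt m * Nat.centralBinom m)^2 := by
          rw [mul_pow, mul_pow, hu]; ring
  have h4 : (0:ℝ) ≤ (4:ℝ)^m := by positivity
  have h5 : (0:ℝ) ≤ 2 * Real.sqrt m * Nat.centralBinom m := by positivity
  exact (pow_le_pow_iff_left₀ h4 h5 (by norm_num)).1 h1

/-- central lower bound: `2^n ≤ 2 √M · C(n, M)` with `M = (n+1)/2`. -/
lemma central_lb (n : ℕ) (hn : 2 ≤ n) :
    (2:ℝ)^n ≤ 2 * Real.sqrt ((n+1)/2 : ℕ) * (n.choose ((n+1)/2)) := by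
  rcases Nat.even_or_odd n with ⟨m, hm⟩ | ⟨m, hm⟩
  · -- n = m + m
    have hm1 : 1 ≤ m := by omega
    have hM : (n+1)/2 = m := by omega
    have hch : n.choose ((n+1)/2) = Nat.centralBinom m := by
      rw [hM, Nat.centralBinom, hm]; congr 1; omega
    rw [hch, hM]
    have h2 : (2:ℝ)^n = 4^m := by
      rw [hm, pow_add, ← mul_pow]; norm_num
    rw [h2]
    exact central_real m hm1
  · -- n = 2m+1
    have hm1 : 1 ≤ m := by omega
    have hM : (n+1)/2 = m + 1 := by omega
    have key : (m+1) * (n.choose (m+1)) = (2*m+1) * Nat.centralBinom m := by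
      have h := Nat.add_one_mul_choose_eq (2*m) m
      rw [hm, Nat.centralBinom]
      calc (m+1) * ((2*m+1).choose (m+1)) = (2*m+1).choose (m+1) * (m+1) := mul_comm _ _
        _ = (2*m+1) * (2*m).choose m := h.symm
    rw [hM]
    set C0 : ℝ := (Nat.centralBinom m : ℝ) with hC0
    set C1 : ℝ := (n.choose (m+1) : ℝ) with hC1
    set u : ℝ := Real.sqrt m with hu
    set v : ℝ := Real.sqrt (m+1 : ℕ) with hv
    have hkey : ((m:ℝ)+1)*C1 = (2*(m:ℝ)+1)*C0 := by
      have h := congrArg (Nat.cast : ℕ → ℝ) key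
      push_cast at h
      rw [hC0, hC1]; linarith [h]
    have heven : (4:ℝ)^m ≤ 2*u*C0 := central_real m hm1
    have hu2 : u^2 = (m:ℝ) := Real.sq_sqrt (by positivity)
    have hv2 : v^2 = (m:ℝ)+1 := by
      rw [hv, Real.sq_sqrt (by positivity : (0:ℝ) ≤ ((m+1:ℕ):ℝ))]; push_cast; ring
    have hu0 : 0 ≤ u := Real.sqrt_nonneg _
    have hv0 : 0 ≤ v := Real.sqrt_nonneg _
    have hC00 : 0 ≤ C0 := by positivity
    have huv : 2*((m:ℝ)+1)*u ≤ v*(2*m+1) := by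
      have hsq : (2*((m:ℝ)+1)*u)^2 ≤ (v*(2*m+1))^2 := by
        have e1 : (2*((m:ℝ)+1)*u)^2 = 4*((m:ℝ)+1)^2*(m:ℝ) := by
          rw [mul_pow, hu2]; ring
        have e2 : (v*(2*(m:ℝ)+1))^2 = ((m:ℝ)+1)*(2*(m:ℝ)+1)^2 := by
          rw [mul_pow, hv2]
        rw [e1, e2]; nlinarith
      have h1 : (0:ℝ) ≤ 2*((m:ℝ)+1)*u := by positivity
      have h2 : (0:ℝ) ≤ v*(2*m+1) := by positivity
      exact (pow_le_pow_iff_left₀ h1 h2 (by norm_num)).1 hsq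
    have h2n : (2:ℝ)^n = 2 * 4^m := by
      rw [hm, pow_succ, pow_mul]; norm_num; ring
    rw [h2n]
    have hmpos : (0:ℝ) < (m:ℝ)+1 := by positivity
    rw [← mul_le_mul_iff_right₀ hmpos]
    calc ((m:ℝ)+1) * (2*4^m) ≤ ((m:ℝ)+1) * (2*(2*u*C0)) := by nlinarith [heven]
      _ = (2*((m:ℝ)+1)*u) * (2*C0) := by ring
      _ ≤ (v*(2*(m:ℝ)+1)) * (2*C0) := by nlinarith [huv, hC00]
      _ = ((m:ℝ)+1) * (2*v*C1) := by linear_combination (-2*v)*hkey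



/-- `C(n, M) · exp(-k(k+1)/(M-k)) ≤ C(n, M+k)` for `k < M`, `M = (n+1)/2`. -/
lemma choose_ratio (n : ℕ) :
    ∀ k : ℕ, k < (n+1)/2 →
      (n.choose ((n+1)/2) : ℝ) * Real.exp (-((k:ℝ)*(k+1)/(((n+1)/2 : ℕ) - (k:ℝ)))) ≤
        (n.choose ((n+1)/2 + k) : ℝ) := by
  set M := (n+1)/2 with hMdef
  have h2M : 2 * M ≤ n + 1 := by omega
  have h2M' : n ≤ 2 * M := by omega
  intro k
  induction k with
  | zero =>
    intro _
    simp
  | succ k ih =>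
    intro hk1
    have hk : k < M := by omega
    have ihk := ih hk
    -- cast positivity facts
    have hMk1 : (k:ℝ) + 1 < (M:ℝ) := by exact_mod_cast hk1
    have hMk : (k:ℝ) < (M:ℝ) := by linarith
    have hMkpos : (0:ℝ) < (M:ℝ) - k := by linarith
    have hMk1pos : (0:ℝ) < (M:ℝ) - (k+1) := by linarith
    -- the ℕ identity: C(n, M+k+1) * (M+k+1) = C(n, M+k) * (n - (M+k))
    have hMkn : M + k ≤ n := by omega
    have hid := Nat.choose_succ_right_eq n (M + k)
    have hidR : (n.choose (M + k + 1) : ℝ) * ((M:ℝ) + k + 1)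
        = (n.choose (M + k) : ℝ) * ((n:ℝ) - ((M:ℝ) + k)) := by
      have h := congrArg (Nat.cast : ℕ → ℝ) hid
      push_cast [hMkn] at h
      convert h using 2 <;> push_cast <;> ring
    -- lower bound the new factor
    have hfac : Real.exp (-(2*((k:ℝ)+1)/((M:ℝ) - (k+1)))) ≤
        ((M:ℝ) - (k+1))/((M:ℝ) + (k+1)) := by
      have := factor_lb (A := (M:ℝ)) (B := (k:ℝ)+1) (by positivity) hMk1
      convert this using 3 <;> ring
    -- n - (M+k) ≥ M - (k+1)
    have hnum : ((M:ℝ) - (k+1)) ≤ (n:ℝ) - ((M:ℝ) + k) := by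
      have hc : ((2*M : ℕ):ℝ) ≤ ((n:ℕ):ℝ) + 1 := by exact_mod_cast h2M
      push_cast at hc
      linarith
    -- exponent subadditivity
    have hexp : Real.exp (-(((k:ℝ)+1)*((k:ℝ)+2)/((M:ℝ) - (k+1)))) ≤
        Real.exp (-((k:ℝ)*(k+1)/((M:ℝ) - k))) * Real.exp (-(2*((k:ℝ)+1)/((M:ℝ) - (k+1)))) := by
      rw [← Real.exp_add]
      apply Real.exp_le_exp.2
      have h1 : (k:ℝ)*(k+1)/((M:ℝ) - k) ≤ (k:ℝ)*(k+1)/((M:ℝ) - (k+1)) :=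
        div_le_div_of_nonneg_left (by positivity) hMk1pos (by linarith)
      have h2 : (k:ℝ)*(k+1)/((M:ℝ) - (k+1)) + 2*((k:ℝ)+1)/((M:ℝ) - (k+1))
          = ((k:ℝ)+1)*((k:ℝ)+2)/((M:ℝ) - (k+1)) := by
        rw [← add_div]
        congr 1
        ring
      linarith
    have hCM0 : (0:ℝ) ≤ (n.choose M : ℝ) := by positivity
    have hCk0 : (0:ℝ) ≤ (n.choose (M+k) : ℝ) := by positivity
    have hMk1pos' : (0:ℝ) < (M:ℝ) + k + 1 := by positivity
    have hfinal : (n.choose (M+k) : ℝ) * (((M:ℝ) - (k+1))/((M:ℝ) + (k+1)))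
        ≤ (n.choose (M + k + 1) : ℝ) := by
      have hC1 : (n.choose (M + k + 1) : ℝ)
          = (n.choose (M + k) : ℝ) * (((n:ℝ) - ((M:ℝ) + k))/((M:ℝ) + k + 1)) := by
        field_simp
        linarith [hidR]
      rw [hC1]
      have : ((M:ℝ) - (k+1))/((M:ℝ) + (k+1)) ≤ ((n:ℝ) - ((M:ℝ) + k))/((M:ℝ) + k + 1) := by
        rw [show (M:ℝ) + ((k:ℝ)+1) = (M:ℝ) + k + 1 by ring]
        exact div_le_div_of_nonneg_right hnum (le_of_lt hMk1pos')
      exact mul_le_mul_of_nonneg_left this hCk0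
    -- assemble
    push_cast
    calc (n.choose M : ℝ) * Real.exp (-(((k:ℝ)+1)*(((k:ℝ)+1)+1)/((M:ℝ) - ((k:ℝ)+1))))
        = (n.choose M : ℝ) * Real.exp (-(((k:ℝ)+1)*((k:ℝ)+2)/((M:ℝ) - (k+1)))) := by
          rw [show ((k:ℝ)+1)+1 = (k:ℝ)+2 from by ring]
      _ ≤ (n.choose M : ℝ) * (Real.exp (-((k:ℝ)*(k+1)/((M:ℝ) - k))) * Real.exp (-(2*((k:ℝ)+1)/((M:ℝ) - (k+1))))) :=
          mul_le_mul_of_nonneg_left hexp hCM0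
      _ = ((n.choose M : ℝ) * Real.exp (-((k:ℝ)*(k+1)/((M:ℝ) - k)))) * Real.exp (-(2*((k:ℝ)+1)/((M:ℝ) - (k+1)))) := by
          ring
      _ ≤ (n.choose (M+k) : ℝ) * Real.exp (-(2*((k:ℝ)+1)/((M:ℝ) - (k+1)))) :=
          mul_le_mul_of_nonneg_right ihk (le_of_lt (Real.exp_pos _))
      _ ≤ (n.choose (M+k) : ℝ) * (((M:ℝ) - (k+1))/((M:ℝ) + (k+1))) :=
          mul_le_mul_of_nonneg_left hfac hCk0
      _ ≤ (n.choose (M + k + 1) : ℝ) := hfinal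
      _ = (n.choose (M + (k+1)) : ℝ) := rfl



variable (n : ℕ)

noncomputable def colW (j : Fin (n+1)) (c : Fin (n+1) → Bool) : ℝ :=
  ∏ i, if i = j then (if c i then 0 else 1) else (1/2 : ℝ)

def deg (j : Fin (n+1)) (c : Fin (n+1) → Bool) : ℕ :=
  ((Finset.univ.erase j).filter (fun i => c i)).card

lemma indeg_eq (x : Fin (n+1) → Fin (n+1) → Bool) (j : Fin (n+1)) :
    indeg x j = deg n j (fun i => x i j) := rfl

lemma apWeight_eq (x : Fin (n+1) → Fin (n+1) → Bool) :
    apWeight (fun _ => (1/2:ℝ)) x = ∏ j, colW n j (fun i => x i j) := by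
  rw [apWeight, Finset.prod_comm]
  apply Finset.prod_congr rfl
  intro j _
  apply Finset.prod_congr rfl
  intro i _
  by_cases h : i = j
  · simp [h]
  · simp only [h, if_false]
    by_cases hx : x i j <;> simp [hx] <;> norm_num

lemma master (G : Fin (n+1) → (Fin (n+1) → Bool) → ℝ) :
    ∑ y : Fin (n+1) → Fin (n+1) → Bool, ∏ j, G j (y j)
      = ∏ j, ∑ c : Fin (n+1) → Bool, G j c := by
  rw [Finset.prod_univ_sum]
  rw [Fintype.piFinset_univ]

lemma sum_transpose (f : (Fin (n+1) → Fin (n+1) → Bool) → ℝ) :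
    ∑ x : Fin (n+1) → Fin (n+1) → Bool, f x
      = ∑ x : Fin (n+1) → Fin (n+1) → Bool, f (fun j i => x i j) := by
  exact (Equiv.sum_comp ⟨fun x => fun j i => x i j, fun x => fun j i => x i j,
    fun x => rfl, fun x => rfl⟩ f).symm

lemma colW_eq (j : Fin (n+1)) (c : Fin (n+1) → Bool) :
    colW n j c = (if c j then 0 else 1) * (1/2:ℝ)^n := by
  rw [colW, ← Finset.mul_prod_erase univ _ (mem_univ j)]
  congr 1
  · simp
  · rw [Finset.prod_congr rfl (g := fun _ => (1/2:ℝ)) (fun i hi => by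
      simp [Finset.ne_of_mem_erase hi]), Finset.prod_const]
    congr 1
    rw [Finset.card_erase_of_mem (mem_univ j), Finset.card_univ, Fintype.card_fin]
    omega

noncomputable def boolEquiv : (Fin (n+1) → Bool) ≃ Finset (Fin (n+1)) where
  toFun c := univ.filter (fun i => c i)
  invFun S := fun i => decide (i ∈ S)
  left_inv c := by
    funext i
    by_cases h : c i <;> simp [h]
  right_inv S := by
    ext i
    simp

lemma col_sum (j : Fin (n+1)) (g : ℕ → ℝ) :
    ∑ c : Fin (n+1) → Bool, colW n j c * g (deg n j c)
      = (1/2:ℝ)^n * ∑ k ∈ range (n+1), (n.choose k : ℝ) * g k := by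
  rw [← Equiv.sum_comp (boolEquiv n).symm (fun c => colW n j c * g (deg n j c))]
  have step1 : ∀ S : Finset (Fin (n+1)),
      colW n j ((boolEquiv n).symm S) * g (deg n j ((boolEquiv n).symm S))
        = (if j ∉ S then (1/2:ℝ)^n * g ((S.erase j).card) else 0) := by
    intro S
    have hc : ∀ i, ((boolEquiv n).symm S) i = decide (i ∈ S) := fun i => rfl
    have hdeg : deg n j ((boolEquiv n).symm S) = (S.erase j).card := by
      unfold deg
      congr 1
      ext a
      simp [Finset.mem_erase, hc, and_comm]
    rw [colW_eq, hdeg, hc]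
    by_cases h : j ∈ S <;> simp [h]
  rw [Finset.sum_congr rfl (fun S _ => step1 S)]
  rw [Finset.sum_ite, Finset.sum_const_zero, add_zero]
  have hset : Finset.filter (fun S => j ∉ S) (univ : Finset (Finset (Fin (n+1))))
      = (univ.erase j).powerset := by
    ext S
    simp [Finset.mem_powerset, Finset.subset_erase]
  rw [hset]
  have herase : ∀ S ∈ (univ.erase j).powerset, (1/2:ℝ)^n * g ((S.erase j).card)
      = (1/2:ℝ)^n * g (S.card) := by
    intro S hS
    rw [Finset.mem_powerset, Finset.subset_erase] at hS
    rw [Finset.erase_eq_of_notMem hS.2]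
  rw [Finset.sum_congr rfl herase]
  have hcard : (univ.erase j).card = n := by
    rw [Finset.card_erase_of_mem (mem_univ j), Finset.card_univ, Fintype.card_fin]
    omega
  rw [Finset.powerset_card_biUnion, Finset.sum_biUnion ((univ.erase j).pairwise_disjoint_powersetCard.set_pairwise _), hcard, Finset.mul_sum]
  apply Finset.sum_congr rfl
  intro k hk
  have hinner : ∀ S ∈ Finset.powersetCard k (univ.erase j),
      (1/2:ℝ)^n * g S.card = (1/2:ℝ)^n * g k := by
    intro S hS
    rw [(Finset.mem_powersetCard.1 hS).2]
  rw [Finset.sum_congr rfl hinner, Finset.sum_const, Finset.card_powersetCard, hcard,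
    nsmul_eq_mul]
  ring

lemma colW_nonneg (j : Fin (n+1)) (c : Fin (n+1) → Bool) : 0 ≤ colW n j c := by
  apply Finset.prod_nonneg
  intro i _
  split_ifs <;> norm_num

lemma cast_sum_choose : ((∑ k ∈ range (n+1), n.choose k : ℕ) : ℝ) = 2^n := by
  rw [Nat.sum_range_choose]
  push_cast
  ring

lemma half_pow_sum : (1/2:ℝ)^n * ∑ k ∈ range (n+1), (n.choose k : ℝ) = 1 := by
  have h : ∑ k ∈ range (n+1), (n.choose k : ℝ) = 2^n := by
    rw [← cast_sum_choose n]
    push_cast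
    rfl
  rw [h, one_div, inv_pow, inv_mul_cancel₀ (by positivity)]

lemma col_sum_one (j : Fin (n+1)) : ∑ c : Fin (n+1) → Bool, colW n j c = 1 := by
  have h := col_sum n j (fun _ => 1)
  simp only [mul_one] at h
  rw [h, half_pow_sum]

lemma sum_k_choose : ∀ m : ℕ, ∑ k ∈ range (m+1), k * m.choose k = m * 2^(m-1) := by
  intro m
  cases m with
  | zero => simp
  | succ m =>
    rw [Finset.sum_range_succ' (fun k => k * (m+1).choose k)]
    simp only [zero_mul, add_zero]
    have hterm : ∀ k, (k+1) * (m+1).choose (k+1) = (m+1) * m.choose k := by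
      intro k
      have h := Nat.add_one_mul_choose_eq m k
      rw [mul_comm]
      exact h.symm
    rw [Finset.sum_congr rfl (fun k _ => hterm k), ← Finset.mul_sum, Nat.sum_range_choose]
    simp

lemma col_sum_id (j : Fin (n+1)) (hn1 : 1 ≤ n) :
    ∑ c : Fin (n+1) → Bool, colW n j c * (deg n j c : ℝ) = n/2 := by
  have h := col_sum n j (fun k => (k:ℝ))
  rw [h]
  have h2 : ∑ k ∈ range (n+1), (n.choose k:ℝ)*(k:ℝ)
      = ((∑ k ∈ range (n+1), k * n.choose k : ℕ) : ℝ) := by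
    push_cast
    exact Finset.sum_congr rfl (fun k _ => by ring)
  rw [h2, sum_k_choose n]
  have h3 : ((n * 2^(n-1) : ℕ):ℝ) = n * 2^(n-1) := by push_cast; ring
  rw [h3]
  obtain ⟨m, rfl⟩ : ∃ m, n = m+1 := ⟨n-1, by omega⟩
  have h4 : (1/2:ℝ)^(m+1) * 2^(m+1-1) = 1/2 := by
    have hmm : ((1:ℝ)/2)^m * (2:ℝ)^m = 1 := by rw [← mul_pow]; norm_num
    rw [Nat.add_sub_cancel, pow_succ]
    linear_combination (1/2) * hmm
  calc (1/2:ℝ)^(m+1) * (((m+1:ℕ):ℝ) * 2^(m+1-1)) = ((m+1:ℕ):ℝ) * ((1/2:ℝ)^(m+1) * 2^(m+1-1)) := by ring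
    _ = ((m+1:ℕ):ℝ) * (1/2) := by rw [h4]
    _ = ((m+1:ℕ):ℝ)/2 := by ring

noncomputable def qv (t : ℕ) : ℝ := (1/2:ℝ)^n * ∑ k ∈ Icc t n, (n.choose k : ℝ)

lemma one_sub_qv (t : ℕ) (ht : t ≤ n+1) :
    1 - qv n t = (1/2:ℝ)^n * ∑ k ∈ range t, (n.choose k : ℝ) := by
  have hsplit : (∑ k ∈ range t, (n.choose k:ℝ)) + ∑ k ∈ Icc t n, (n.choose k:ℝ)
      = ∑ k ∈ range (n+1), (n.choose k:ℝ) := by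
    rw [Finset.range_eq_Ico, Finset.range_eq_Ico, ← Finset.Ico_add_one_right_eq_Icc]
    exact Finset.sum_Ico_consecutive (fun k => (n.choose k:ℝ)) (Nat.zero_le t) ht
  have h1 := half_pow_sum n
  rw [qv]
  linear_combination (-1) * h1 - (1/2:ℝ)^n * hsplit

lemma qv_nonneg_aux (t : ℕ) (ht : t ≤ n+1) : 0 ≤ 1 - qv n t := by
  rw [one_sub_qv n t ht]
  apply mul_nonneg (by positivity)
  apply Finset.sum_nonneg
  intro k _
  positivity

lemma col_sum_chi (j : Fin (n+1)) (t : ℕ) (ht : t ≤ n+1) :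
    ∑ c : Fin (n+1) → Bool, colW n j c * (if t ≤ deg n j c then (0:ℝ) else 1)
      = 1 - qv n t := by
  rw [col_sum n j (fun k => if t ≤ k then (0:ℝ) else 1), one_sub_qv n t ht]
  congr 1
  have hre : ∀ k ∈ range (n+1), (n.choose k:ℝ) * (if t ≤ k then (0:ℝ) else 1)
      = (if ¬ t ≤ k then (n.choose k:ℝ) else 0) := by
    intro k _
    by_cases h : t ≤ k <;> simp [h]
  rw [Finset.sum_congr rfl hre, Finset.sum_ite, Finset.sum_const_zero, add_zero]
  congr 1
  ext k
  simp only [Finset.mem_filter, Finset.mem_range]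
  omega

lemma col_sum_phi (j : Fin (n+1)) (t : ℕ) (hn1 : 1 ≤ n) :
    (t:ℝ) - n/2 ≤ ∑ c : Fin (n+1) → Bool, colW n j c * max ((t:ℝ) - deg n j c) 0 := by
  have h1 : ∑ c : Fin (n+1) → Bool, colW n j c * ((t:ℝ) - deg n j c) = (t:ℝ) - n/2 := by
    have : ∀ c : Fin (n+1) → Bool, colW n j c * ((t:ℝ) - deg n j c)
        = (t:ℝ) * colW n j c - colW n j c * (deg n j c : ℝ) := fun c => by ring
    rw [Finset.sum_congr rfl (fun c _ => this c), Finset.sum_sub_distrib, ← Finset.mul_sum,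
      col_sum_one n j, col_sum_id n j hn1]
    ring
  rw [← h1]
  apply Finset.sum_le_sum
  intro c _
  exact mul_le_mul_of_nonneg_left (le_max_left _ _) (colW_nonneg n j c)

lemma master_mul (H : Fin (n+1) → (Fin (n+1) → Bool) → ℝ) :
    ∑ y : Fin (n+1) → Fin (n+1) → Bool, (∏ j, colW n j (y j)) * (∏ j, H j (y j))
      = ∏ j, (∑ c : Fin (n+1) → Bool, colW n j c * H j c) := by
  have h : ∀ y : Fin (n+1) → Fin (n+1) → Bool,
      (∏ j, colW n j (y j)) * (∏ j, H j (y j)) = ∏ j, (colW n j (y j) * H j (y j)) := by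
    intro y
    rw [Finset.prod_mul_distrib]
  rw [Finset.sum_congr rfl (fun y _ => h y)]
  exact master n (fun j c => colW n j c * H j c)

lemma master_single (F : (Fin (n+1) → Bool) → ℝ) (u : Fin (n+1)) :
    ∑ y : Fin (n+1) → Fin (n+1) → Bool, (∏ j, colW n j (y j)) * F (y u)
      = ∑ c : Fin (n+1) → Bool, colW n u c * F c := by
  have h := master_mul n (fun j c => if j = u then F c else 1)
  have h2 : ∀ y : Fin (n+1) → Fin (n+1) → Bool,
      (∏ j, if j = u then F (y j) else (1:ℝ)) = F (y u) := by
    intro y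
    rw [Finset.prod_ite_eq' univ u (fun j => F (y j))]
    simp
  simp only [h2] at h
  rw [h]
  rw [Finset.prod_eq_single u]
  · simp
  · intro j _ hj
    simp only [hj, if_false, mul_one]
    exact col_sum_one n j
  · intro h
    exact absurd (mem_univ u) h

lemma expectation_one : ∑ y : Fin (n+1) → Fin (n+1) → Bool, (∏ j, colW n j (y j)) = 1 := by
  have h := master_single n (fun _ => (1:ℝ)) ⟨0, Nat.succ_pos n⟩
  simp only [mul_one] at h
  rw [h, col_sum_one]

lemma expectation_deg (u : Fin (n+1)) (hn1 : 1 ≤ n) :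
    ∑ y : Fin (n+1) → Fin (n+1) → Bool, (∏ j, colW n j (y j)) * (deg n u (y u) : ℝ)
      = n/2 := by
  rw [master_single n (fun c => (deg n u c : ℝ)) u, col_sum_id n u hn1]

lemma expectation_phi (u : Fin (n+1)) (t : ℕ) :
    ∑ y : Fin (n+1) → Fin (n+1) → Bool,
        (∏ j, colW n j (y j)) * max ((t:ℝ) - deg n u (y u)) 0
      = ∑ c : Fin (n+1) → Bool, colW n u c * max ((t:ℝ) - deg n u c) 0 :=
  master_single n (fun c => max ((t:ℝ) - deg n u c) 0) u

lemma expectation_phi_chi (u : Fin (n+1)) (t : ℕ) (ht : t ≤ n+1) :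
    ∑ y : Fin (n+1) → Fin (n+1) → Bool,
        (∏ j, colW n j (y j)) *
          (max ((t:ℝ) - deg n u (y u)) 0 *
            ∏ j ∈ univ.erase u, (if t ≤ deg n j (y j) then (0:ℝ) else 1))
      = (∑ c : Fin (n+1) → Bool, colW n u c * max ((t:ℝ) - deg n u c) 0)
          * (1 - qv n t)^n := by
  have h := master_mul n (fun j c => if j = u then max ((t:ℝ) - deg n j c) 0
    else (if t ≤ deg n j c then (0:ℝ) else 1))
  have h2 : ∀ y : Fin (n+1) → Fin (n+1) → Bool,
      (∏ j, if j = u then max ((t:ℝ) - deg n j (y j)) 0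
        else (if t ≤ deg n j (y j) then (0:ℝ) else 1))
      = max ((t:ℝ) - deg n u (y u)) 0 *
          ∏ j ∈ univ.erase u, (if t ≤ deg n j (y j) then (0:ℝ) else 1) := by
    intro y
    rw [← Finset.mul_prod_erase univ _ (mem_univ u)]
    simp only [if_pos rfl]
    congr 1
    apply Finset.prod_congr rfl
    intro j hj
    simp [Finset.ne_of_mem_erase hj]
  simp only [h2] at h
  rw [h, ← Finset.mul_prod_erase univ _ (mem_univ u)]
  simp only [if_pos rfl]
  congr 1
  rw [Finset.prod_congr rfl (g := fun _ => 1 - qv n t) (fun j hj => by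
    have hju : j ≠ u := Finset.ne_of_mem_erase hj
    simp only [hju, if_false]
    exact col_sum_chi n j t ht), Finset.prod_const]
  congr 1
  rw [Finset.card_erase_of_mem (mem_univ u), Finset.card_univ, Fintype.card_fin]
  omega

lemma pointwise (u : Fin (n+1)) (t : ℕ) (y : Fin (n+1) → Fin (n+1) → Bool) :
    max ((t:ℝ) - deg n u (y u)) 0 -
        max ((t:ℝ) - deg n u (y u)) 0 *
          ∏ j ∈ univ.erase u, (if t ≤ deg n j (y j) then (0:ℝ) else 1)
      ≤ ((univ.sup (fun j => deg n j (y j)) : ℕ) : ℝ) - (deg n u (y u) : ℝ) := by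
  have hsupu : (deg n u (y u) : ℝ) ≤ ((univ.sup (fun j => deg n j (y j)) : ℕ) : ℝ) := by
    exact_mod_cast Nat.cast_le.2 (Finset.le_sup (f := fun j => deg n j (y j)) (mem_univ u))
  by_cases hex : ∃ j ∈ univ.erase u, t ≤ deg n j (y j)
  · obtain ⟨j0, hj0, hj0t⟩ := hex
    have hP : (∏ j ∈ univ.erase u, (if t ≤ deg n j (y j) then (0:ℝ) else 1)) = 0 := by
      apply Finset.prod_eq_zero hj0
      simp [hj0t]
    rw [hP, mul_zero, sub_zero]
    have hsupt : (t:ℝ) ≤ ((univ.sup (fun j => deg n j (y j)) : ℕ) : ℝ) := by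
      have h1 : t ≤ univ.sup (fun j => deg n j (y j)) :=
        le_trans hj0t (Finset.le_sup (f := fun j => deg n j (y j)) (mem_univ j0))
      exact_mod_cast h1
    apply max_le
    · linarith
    · linarith
  · push_neg at hex
    have hP : (∏ j ∈ univ.erase u, (if t ≤ deg n j (y j) then (0:ℝ) else 1)) = 1 := by
      apply Finset.prod_eq_one
      intro j hj
      simp [hex j hj]
    rw [hP, mul_one, sub_self]
    linarith



lemma base_facts (n : ℕ) (hn : 80 ≤ n) :
    4.35 ≤ Real.log n ∧ Real.log n ≤ 0.0824 * n ∧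
    Real.sqrt (n * Real.log n) ≤ 0.2871 * n ∧
    Real.sqrt (n * Real.log n) * Real.log n ≤ 1.1596 * n := by
  have hn80 : (80:ℝ) ≤ (n:ℝ) := by exact_mod_cast hn
  have hnpos : (0:ℝ) < n := by linarith
  -- log 80 ≥ 4.35
  have hlog80 : (4.35:ℝ) ≤ Real.log 80 := by
    have h80 : (80:ℝ) = 2^6 * (5/4) := by norm_num
    rw [h80, Real.log_mul (by norm_num) (by norm_num), Real.log_pow]
    have h2 := Real.log_two_gt_d9
    have h54 : (0.2:ℝ) ≤ Real.log (5/4) := by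
      have h := Real.log_le_sub_one_of_pos (show (0:ℝ) < 4/5 by norm_num)
      have hinv : Real.log (5/4 : ℝ) = - Real.log (4/5 : ℝ) := by
        rw [show (5/4 : ℝ) = (4/5 : ℝ)⁻¹ by norm_num, Real.log_inv]
      rw [hinv]; linarith
    push_cast
    nlinarith
  have hL80 : (4.35:ℝ) ≤ Real.log n :=
    le_trans hlog80 (Real.log_le_log (by norm_num) hn80)
  set L := Real.log n with hLdef
  have hL0 : (0:ℝ) < L := by linarith
  have hsq : Real.sqrt n * Real.sqrt n = (n:ℝ) := Real.mul_self_sqrt (le_of_lt hnpos)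
  have hsq0 : (0:ℝ) ≤ Real.sqrt n := Real.sqrt_nonneg _
  have hsq80 : (8.944:ℝ) ≤ Real.sqrt n := by
    rw [show (8.944:ℝ) = Real.sqrt (8.944^2) from (Real.sqrt_sq (by norm_num)).symm]
    apply Real.sqrt_le_sqrt
    nlinarith
  have hE := Real.exp_one_gt_d9
  have hEpos := Real.exp_pos 1
  -- L * e ≤ 2 √n
  have hLe : L * Real.exp 1 ≤ 2 * Real.sqrt n := by
    have h1 : Real.log (Real.sqrt n) = L / 2 := by
      rw [hLdef, Real.log_sqrt (le_of_lt hnpos)]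
    have h2 : Real.log (Real.sqrt n) ≤ Real.sqrt n / Real.exp 1 :=
      log_le_div_e (by positivity)
    rw [h1] at h2
    rw [div_le_div_iff₀ (by norm_num) hEpos] at h2
    linarith
  have hLn : L ≤ 0.0824 * n := by
    have k1 : 2 * Real.sqrt n ≥ 2.7182818283 * L := by nlinarith
    have k2 : (n:ℝ) ≥ 8.944 * Real.sqrt n := by nlinarith
    nlinarith
  -- cube root bound
  have hL3 : L^3 ≤ 1.3445 * n := by
    set w : ℝ := (n:ℝ)^((1:ℝ)/3) with hwdef
    have hwpos : 0 < w := Real.rpow_pos_of_pos hnpos _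
    have hlogw : Real.log w = L / 3 := by
      rw [hwdef, Real.log_rpow hnpos]; ring
    have hw3 : w^3 = (n:ℝ) := by
      rw [hwdef, ← Real.rpow_natCast ((n:ℝ)^((1:ℝ)/3)) 3, ← Real.rpow_mul (le_of_lt hnpos)]
      norm_num
    have h2 : L / 3 ≤ w / Real.exp 1 := by
      rw [← hlogw]; exact log_le_div_e hwpos
    have h3 : L * Real.exp 1 ≤ 3 * w := by
      rw [div_le_div_iff₀ (by norm_num) hEpos] at h2
      linarith
    have h4 : (L * Real.exp 1)^3 ≤ (3*w)^3 := by
      apply pow_le_pow_left₀ (by positivity) h3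
    have h5 : L^3 * (Real.exp 1)^3 ≤ 27 * n := by
      rw [mul_pow] at h4
      nlinarith [hw3]
    have hE3 : (20.0855:ℝ) ≤ (Real.exp 1)^3 := by
      nlinarith [pow_le_pow_left₀ (show (0:ℝ) ≤ 2.7182818283 by norm_num) hE.le 3]
    have h6 := mul_le_mul_of_nonneg_left hE3 (le_of_lt (pow_pos hL0 3))
    linarith
  set s := Real.sqrt (n * L) with hsdef
  have hs0 : 0 ≤ s := Real.sqrt_nonneg _
  have hs2 : s^2 = n * L := Real.sq_sqrt (by positivity)
  have hsn : s ≤ 0.2871 * n := by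
    have h1 : s^2 ≤ (0.2871*n)^2 := by nlinarith [hs2]
    exact (pow_le_pow_iff_left₀ hs0 (by positivity) (by norm_num)).1 h1
  have hsL : s * L ≤ 1.1596 * n := by
    have h1 : (s*L)^2 ≤ (1.1596*n)^2 := by nlinarith [hs2]
    exact (pow_le_pow_iff_left₀ (by positivity) (by positivity) (by norm_num)).1 h1
  exact ⟨hL80, hLn, hsn, hsL⟩

lemma claimE (n a M : ℕ) (hn : 80 ≤ n)
    (ha : Real.sqrt (n * Real.log n) / 5 ≤ (a:ℝ))
    (ha' : (a:ℝ) ≤ Real.sqrt (n * Real.log n) / 5 + 1)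
    (hM1 : (n:ℝ)/2 ≤ (M:ℝ)) (hM2 : (M:ℝ) ≤ ((n:ℝ)+1)/2) :
    (((a:ℝ)+1) * (((a:ℝ)+1)+1) / ((M:ℝ) - ((a:ℝ)+1)) ≤
        Real.log ((n:ℝ) / (2 * Real.sqrt M)))
      ∧ ((a:ℝ) + 1 < (M:ℝ)) ∧ ((M:ℝ) + (a:ℝ) + 1 ≤ (n:ℝ)) := by
  obtain ⟨hL80, hLn, hsn, hsL⟩ := base_facts n hn
  have hn80 : (80:ℝ) ≤ (n:ℝ) := by exact_mod_cast hn
  set L := Real.log n with hLdef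
  set s := Real.sqrt (n * L) with hsdef
  have hs0 : 0 ≤ s := Real.sqrt_nonneg _
  have hs2 : s^2 = n * L := Real.sq_sqrt (by positivity)
  have hKM : (a:ℝ) + 1 < (M:ℝ) := by nlinarith
  have hMan : (M:ℝ) + (a:ℝ) + 1 ≤ (n:ℝ) := by nlinarith
  refine ⟨?_, hKM, hMan⟩
  have hMpos : (0:ℝ) < (M:ℝ) := by nlinarith
  have hsqM0 : (0:ℝ) < Real.sqrt M := Real.sqrt_pos.2 hMpos
  -- lower bound for the log
  have hlog : L/2 - 0.353 ≤ Real.log ((n:ℝ) / (2 * Real.sqrt M)) := by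
    have hnn0 : (n:ℝ) ≠ 0 := by positivity
    rw [Real.log_div hnn0 (by positivity), Real.log_mul (by norm_num) (ne_of_gt hsqM0),
      Real.log_sqrt (le_of_lt hMpos)]
    have hlogM : Real.log M ≤ Real.log (((n:ℝ)+1)/2) :=
      Real.log_le_log hMpos hM2
    have hsplit : Real.log (((n:ℝ)+1)/2) = Real.log ((n:ℝ)+1) - Real.log 2 :=
      Real.log_div (by positivity) (by norm_num)
    have hlogn1 : Real.log ((n:ℝ)+1) ≤ L + 1/80 := by
      have h1 : Real.log ((n:ℝ)+1) - L = Real.log (((n:ℝ)+1)/n) := by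
        rw [Real.log_div (by positivity) hnn0]
      have h2 : Real.log (((n:ℝ)+1)/n) ≤ ((n:ℝ)+1)/n - 1 :=
        Real.log_le_sub_one_of_pos (by positivity)
      have h3 : ((n:ℝ)+1)/n - 1 = 1/n := by field_simp; ring
      have h4 : (1:ℝ)/n ≤ 1/80 := by
        apply div_le_div_of_nonneg_left (by norm_num) (by norm_num) hn80
      nlinarith [h1, h2]
    have hl2u := Real.log_two_lt_d9
    have hl2l := Real.log_two_gt_d9
    nlinarith [hlogM, hsplit]
  refine le_trans ?_ hlog
  -- now the arithmetic inequality
  have hden : (0:ℝ) < (n:ℝ)/2 - s/5 - 2 := by nlinarith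
  have hstep1 : ((a:ℝ)+1) * (((a:ℝ)+1)+1) / ((M:ℝ) - ((a:ℝ)+1))
      ≤ (s/5+2) * (s/5+3) / ((n:ℝ)/2 - s/5 - 2) := by
    apply div_le_div₀ (by positivity) ?_ hden ?_
    · nlinarith
    · nlinarith
  refine le_trans hstep1 ?_
  rw [div_le_iff₀ hden]
  have hnL : 4.35 * n ≤ (n:ℝ) * L := by nlinarith
  nlinarith [hs2, hsn, hsL, hLn, hnL, hn80, hs0]


lemma qv_ge (n : ℕ) (hn : 80 ≤ n) :
    2/(n:ℝ) ≤ qv n ((n+1)/2 + ⌈Real.sqrt (n * Real.log n)/5⌉₊) ∧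
    Real.sqrt (n * Real.log n)/5 ≤
      ((((n+1)/2 + ⌈Real.sqrt (n * Real.log n)/5⌉₊ : ℕ)):ℝ) - (n:ℝ)/2 ∧
    ((n+1)/2 + ⌈Real.sqrt (n * Real.log n)/5⌉₊) + 1 ≤ n := by
  set s := Real.sqrt (n * Real.log n) with hsdef
  set a := ⌈s/5⌉₊ with hadef
  set M := (n+1)/2 with hMdef
  have hs0 : 0 ≤ s := Real.sqrt_nonneg _
  have ha1 : s/5 ≤ (a:ℝ) := Nat.le_ceil _
  have ha2 : (a:ℝ) ≤ s/5 + 1 := le_of_lt (Nat.ceil_lt_add_one (by positivity))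
  have hM1 : (n:ℝ)/2 ≤ (M:ℝ) := by
    have h : n ≤ 2 * M := by omega
    have h2 := (Nat.cast_le (α := ℝ)).2 h
    push_cast at h2
    linarith
  have hM2 : (M:ℝ) ≤ ((n:ℝ)+1)/2 := by
    have h : 2 * M ≤ n + 1 := by omega
    have h2 := (Nat.cast_le (α := ℝ)).2 h
    push_cast at h2
    linarith
  obtain ⟨hE, hKM, hMan⟩ := claimE n a M hn ha1 ha2 hM1 hM2
  have hKMn : a + 1 < M := by
    have : ((a+1:ℕ):ℝ) < (M:ℝ) := by push_cast; linarith
    exact_mod_cast this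
  have htn : M + a + 1 ≤ n := by
    have : ((M+a+1:ℕ):ℝ) ≤ ((n:ℕ):ℝ) := by push_cast; linarith
    exact_mod_cast this
  refine ⟨?_, by push_cast; linarith, htn⟩
  set t := M + a with htdef
  -- C(n, t+1) ≤ C(n, t)
  have hdec : n.choose (t+1) ≤ n.choose t := by
    have hid := Nat.choose_succ_right_eq n t
    have h2t : n - t ≤ t + 1 := by omega
    have h3 : n.choose (t+1) * (t+1) ≤ n.choose t * (t+1) := by
      calc n.choose (t+1) * (t+1) = n.choose t * (n - t) := hid
        _ ≤ n.choose t * (t+1) := Nat.mul_le_mul_left _ h2t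
    exact Nat.le_of_mul_le_mul_right h3 (by omega)
  have hq1 : (1/2:ℝ)^n * ((n.choose t : ℝ) + (n.choose (t+1) : ℝ)) ≤ qv n t := by
    rw [qv]
    apply mul_le_mul_of_nonneg_left ?_ (by positivity)
    have hsub : ({t, t+1} : Finset ℕ) ⊆ Icc t n := by
      intro x hx
      simp only [Finset.mem_insert, Finset.mem_singleton] at hx
      rcases hx with rfl | rfl <;> simp [Finset.mem_Icc] <;> omega
    have hsum : ∑ k ∈ ({t, t+1} : Finset ℕ), (n.choose k:ℝ)
        = (n.choose t:ℝ) + (n.choose (t+1):ℝ) := by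
      rw [Finset.sum_insert (by simp), Finset.sum_singleton]
    rw [← hsum]
    apply Finset.sum_le_sum_of_subset_of_nonneg hsub
    intro k _ _
    positivity
  have hch := choose_ratio n (a+1) hKMn
  have hMpos : (0:ℝ) < (M:ℝ) := by linarith
  have hsqM0 : (0:ℝ) < Real.sqrt M := Real.sqrt_pos.2 hMpos
  set X := (((a:ℝ))+1) * ((((a:ℝ))+1)+1) / ((M:ℝ) - (((a:ℝ))+1)) with hXdef
  have hch' : (n.choose M : ℝ) * Real.exp (-X) ≤ (n.choose (M + (a+1)) : ℝ) := by
    have heq : -((((a+1:ℕ)):ℝ) * ((((a+1:ℕ)):ℝ) + 1) / ((M:ℝ) - (((a+1:ℕ)):ℝ))) = -X := by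
      rw [hXdef]; push_cast; ring_nf
    rw [← heq]
    exact hch
  have hcent := central_lb n (by omega)
  have hnpos : (0:ℝ) < (n:ℝ) := by
    have : (80:ℝ) ≤ (n:ℝ) := by exact_mod_cast hn
    linarith
  have hdivpos : (0:ℝ) < (n:ℝ)/(2*Real.sqrt M) := by positivity
  have hexpX : 2 * Real.sqrt M / n ≤ Real.exp (-X) := by
    have h1 : Real.exp (-Real.log ((n:ℝ)/(2*Real.sqrt M))) = 2*Real.sqrt M/n := by
      rw [Real.exp_neg, Real.exp_log hdivpos, inv_div]
    rw [← h1]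
    exact Real.exp_le_exp.2 (neg_le_neg hE)
  have hCM : (2:ℝ)^n/(2*Real.sqrt M) ≤ (n.choose M : ℝ) := by
    rw [div_le_iff₀ (by positivity)]
    linarith [hcent]
  have hhalf : (1/2:ℝ)^n * (2:ℝ)^n = 1 := by
    rw [← mul_pow]; norm_num
  have hEX0 : (0:ℝ) < Real.exp (-X) := Real.exp_pos _
  calc 2/(n:ℝ) = (2 * Real.sqrt M / n) / Real.sqrt M := by
        field_simp
    _ ≤ Real.exp (-X) / Real.sqrt M :=
        div_le_div_of_nonneg_right hexpX (le_of_lt hsqM0)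
    _ = (1/2:ℝ)^n * (2 * ((2:ℝ)^n/(2*Real.sqrt M) * Real.exp (-X))) := by
        field_simp
        ring_nf
        exact hhalf.symm
    _ ≤ (1/2:ℝ)^n * (2 * ((n.choose M : ℝ) * Real.exp (-X))) := by
        apply mul_le_mul_of_nonneg_left ?_ (by positivity)
        apply mul_le_mul_of_nonneg_left ?_ (by norm_num)
        exact mul_le_mul_of_nonneg_right hCM (le_of_lt hEX0)
    _ ≤ (1/2:ℝ)^n * (2 * (n.choose (M + (a+1)) : ℝ)) := by
        apply mul_le_mul_of_nonneg_left ?_ (by positivity)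
        apply mul_le_mul_of_nonneg_left hch' (by norm_num)
    _ = (1/2:ℝ)^n * ((n.choose (t+1) : ℝ) + (n.choose (t+1) : ℝ)) := by
        have : M + (a+1) = t + 1 := by omega
        rw [this]; ring
    _ ≤ (1/2:ℝ)^n * ((n.choose t : ℝ) + (n.choose (t+1) : ℝ)) := by
        apply mul_le_mul_of_nonneg_left ?_ (by positivity)
        have : (n.choose (t+1):ℝ) ≤ (n.choose t:ℝ) := by exact_mod_cast hdec
        linarith
    _ ≤ qv n t := hq1

lemma key (n : ℕ) (hn : 80 ≤ n) (u : Fin (n+1)) :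
    (1/6) * Real.sqrt (n * Real.log n) ≤
      ∑ y : Fin (n+1) → Fin (n+1) → Bool,
        (∏ j, colW n j (y j)) *
          (((univ.sup (fun j => deg n j (y j)) : ℕ):ℝ) - (deg n u (y u):ℝ)) := by
  obtain ⟨hqv, hts, htn⟩ := qv_ge n hn
  set s := Real.sqrt (n * Real.log n) with hsdef
  set t := (n+1)/2 + ⌈s/5⌉₊ with htdef
  have hs0 : 0 ≤ s := Real.sqrt_nonneg _
  have ht1 : t ≤ n + 1 := by omega
  have hnR : (80:ℝ) ≤ (n:ℝ) := by exact_mod_cast hn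
  have W0 : ∀ y : Fin (n+1) → Fin (n+1) → Bool, 0 ≤ ∏ j, colW n j (y j) :=
    fun y => Finset.prod_nonneg (fun j _ => colW_nonneg n j (y j))
  -- pointwise inequality summed
  have hstep : ∑ y : Fin (n+1) → Fin (n+1) → Bool,
      (∏ j, colW n j (y j)) *
        (max ((t:ℝ) - deg n u (y u)) 0 -
          max ((t:ℝ) - deg n u (y u)) 0 *
            ∏ j ∈ univ.erase u, (if t ≤ deg n j (y j) then (0:ℝ) else 1))
      ≤ ∑ y : Fin (n+1) → Fin (n+1) → Bool,
        (∏ j, colW n j (y j)) *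
          (((univ.sup (fun j => deg n j (y j)) : ℕ):ℝ) - (deg n u (y u):ℝ)) := by
    apply Finset.sum_le_sum
    intro y _
    exact mul_le_mul_of_nonneg_left (pointwise n u t y) (W0 y)
  refine le_trans ?_ hstep
  -- split the sum
  have hsplit : ∑ y : Fin (n+1) → Fin (n+1) → Bool,
      (∏ j, colW n j (y j)) *
        (max ((t:ℝ) - deg n u (y u)) 0 -
          max ((t:ℝ) - deg n u (y u)) 0 *
            ∏ j ∈ univ.erase u, (if t ≤ deg n j (y j) then (0:ℝ) else 1))
      = (∑ c : Fin (n+1) → Bool, colW n u c * max ((t:ℝ) - deg n u c) 0)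
          * (1 - (1 - qv n t)^n) := by
    have h1 : ∀ y : Fin (n+1) → Fin (n+1) → Bool,
        (∏ j, colW n j (y j)) *
          (max ((t:ℝ) - deg n u (y u)) 0 -
            max ((t:ℝ) - deg n u (y u)) 0 *
              ∏ j ∈ univ.erase u, (if t ≤ deg n j (y j) then (0:ℝ) else 1))
        = (∏ j, colW n j (y j)) * max ((t:ℝ) - deg n u (y u)) 0 -
            (∏ j, colW n j (y j)) *
              (max ((t:ℝ) - deg n u (y u)) 0 *
                ∏ j ∈ univ.erase u, (if t ≤ deg n j (y j) then (0:ℝ) else 1)) := by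
      intro y; ring
    rw [Finset.sum_congr rfl (fun y _ => h1 y), Finset.sum_sub_distrib,
      expectation_phi n u t, expectation_phi_chi n u t ht1]
    ring
  rw [hsplit]
  -- lower bounds
  have hPhi : s/5 ≤ ∑ c : Fin (n+1) → Bool, colW n u c * max ((t:ℝ) - deg n u c) 0 := by
    refine le_trans ?_ (col_sum_phi n u t (by omega))
    linarith
  have hq0 : 0 ≤ 1 - qv n t := qv_nonneg_aux n t ht1
  have hpow : (1 - qv n t)^n ≤ 1/6 := by
    have h2n : 1 - qv n t ≤ Real.exp (-(2/(n:ℝ))) := by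
      have h := Real.add_one_le_exp (-(2/(n:ℝ)))
      linarith
    have hp : (1 - qv n t)^n ≤ Real.exp (-(2/(n:ℝ)))^n :=
      pow_le_pow_left₀ hq0 h2n n
    have hexpn : Real.exp (-(2/(n:ℝ)))^n = Real.exp (-2) := by
      rw [← Real.exp_nat_mul]
      congr 1
      field_simp
    have he2 : Real.exp (-2:ℝ) ≤ 1/6 := by
      rw [show (-2:ℝ) = -(1+1) by norm_num, Real.exp_neg, Real.exp_add]
      have hE := Real.exp_one_gt_d9
      have h6 : (6:ℝ) ≤ Real.exp 1 * Real.exp 1 := by nlinarith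
      have h0 : (0:ℝ) < Real.exp 1 * Real.exp 1 := by positivity
      rw [show (1/6:ℝ) = (6:ℝ)⁻¹ by norm_num]
      exact inv_anti₀ (by norm_num) h6
    linarith [hp, hexpn.le, hexpn.ge]
  have hfac : (5/6:ℝ) ≤ 1 - (1 - qv n t)^n := by linarith
  calc (1/6) * s = (s/5) * (5/6) := by ring
    _ ≤ (∑ c : Fin (n+1) → Bool, colW n u c * max ((t:ℝ) - deg n u c) 0)
          * (1 - (1 - qv n t)^n) := by
        apply mul_le_mul hPhi hfac (by norm_num) (le_trans (by positivity) hPhi)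

lemma transform (n : ℕ) (u : Fin (n+1)) (g : ℕ → ℕ → ℝ) :
    ∑ x : Fin (n+1) → Fin (n+1) → Bool,
        apWeight (fun _ => (1/2:ℝ)) x * g (maxdeg x) (indeg x u)
      = ∑ y : Fin (n+1) → Fin (n+1) → Bool,
        (∏ j, colW n j (y j)) * g (univ.sup (fun j => deg n j (y j))) (deg n u (y u)) := by
  rw [sum_transpose n (fun x => apWeight (fun _ => (1/2:ℝ)) x * g (maxdeg x) (indeg x u))]
  apply Finset.sum_congr rfl
  intro y _
  congr 1
  rw [apWeight_eq]

lemma exp_indeg (n : ℕ) (hn1 : 1 ≤ n) (u : Fin (n+1)) :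
    ∑ x : Fin (n+1) → Fin (n+1) → Bool,
        apWeight (fun _ => (1/2:ℝ)) x * ((indeg x u : ℕ):ℝ) = (n:ℝ)/2 := by
  rw [transform n u (fun _ d => (d:ℝ))]
  exact expectation_deg n u hn1

lemma key' (n : ℕ) (hn : 80 ≤ n) (u : Fin (n+1)) :
    (1/6) * Real.sqrt (n * Real.log n) ≤
      ∑ x : Fin (n+1) → Fin (n+1) → Bool,
        apWeight (fun _ => (1/2:ℝ)) x * ((maxdeg x : ℝ) - (indeg x u : ℝ)) := by
  rw [transform n u (fun m d => (m:ℝ) - (d:ℝ))]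
  exact key n hn u

end Stmt2Aux

open Stmt2Aux in
/-- In the uniform model with `p = 1/2` on `n+1` nodes (`n ≥ 80`),
`E[Δ(x)] ≥ n/2 + (1/6)√(n·ln n)`; consequently every constant mechanism
(returning a fixed node `u*`) has expected additive approximation at least
`(1/6)√(n·ln n)`. -/
theorem stmt_2 (n : ℕ) (hn : 80 ≤ n) :
    ((∑ x : Fin (n + 1) → Fin (n + 1) → Bool,
        apWeight (fun _ => (1 / 2 : ℝ)) x * (maxdeg x : ℝ))
      ≥ (n : ℝ) / 2 + (1 / 6) * Real.sqrt (n * Real.log n)) ∧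
    (∀ ustar : Fin (n + 1),
      (∑ x : Fin (n + 1) → Fin (n + 1) → Bool,
          apWeight (fun _ => (1 / 2 : ℝ)) x * ((maxdeg x : ℝ) - (indeg x ustar : ℝ)))
        ≥ (1 / 6) * Real.sqrt (n * Real.log n)) := by
  constructor
  · set u0 : Fin (n+1) := ⟨0, by omega⟩
    have hkey := key' n hn u0
    have hd := exp_indeg n (by omega) u0
    have hsum : ∑ x : Fin (n + 1) → Fin (n + 1) → Bool,
        apWeight (fun _ => (1 / 2 : ℝ)) x * (maxdeg x : ℝ)
        = (∑ x : Fin (n + 1) → Fin (n + 1) → Bool,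
            apWeight (fun _ => (1 / 2 : ℝ)) x * ((maxdeg x : ℝ) - (indeg x u0 : ℝ)))
          + ∑ x : Fin (n + 1) → Fin (n + 1) → Bool,
            apWeight (fun _ => (1 / 2 : ℝ)) x * ((indeg x u0 : ℕ):ℝ) := by
      rw [← Finset.sum_add_distrib]
      apply Finset.sum_congr rfl
      intro x _
      push_cast
      ring
    rw [ge_iff_le, hsum, hd]
    linarith
  · intro ustar
    exact key' n hn ustar
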